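/- If R is a ring whose prime radical J is nilpotent and R/J is a semiprime right Goldie ring, then every nil one-sided ideal of R is nilpotent. -/

import Mathlib

/-- A subset `S` of a ring is nilpotent (of some exponent `n > 0`) if all products of
`n` elements of `S` vanish. -/
def SetNilpotent {A : Type} [Ring A] (S : Set A) : Prop :=
  ∃ n : ℕ, 0 < n ∧ ∀ l : List A, l.length = n → (∀ x ∈ l, x ∈ S) → l.prod = 0
/-- A one-sided (right or left) ideal of `A`: an additive subgroup closed under
multiplication by ring elements on (at least) one side. -/
def IsOneSidedIdeal {A : Type} [Ring A] (S : AddSubgroup A) : Prop :=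
  (∀ a ∈ S, ∀ r : A, a * r ∈ S) ∨ (∀ a ∈ S, ∀ r : A, r * a ∈ S)
/-- A two-sided ideal `P` of a (possibly noncommutative) ring is prime if it is proper and
`aRb ⊆ P` implies `a ∈ P` or `b ∈ P`. -/
def IsPrimeTI {A : Type} [Ring A] (P : TwoSidedIdeal A) : Prop :=
  P ≠ ⊤ ∧ ∀ a b : A, (∀ r : A, a * r * b ∈ P) → a ∈ P ∨ b ∈ P

/-- The prime radical (lower nilradical): the intersection of all prime two-sided ideals. -/
def primeRadical (A : Type) [Ring A] : TwoSidedIdeal A :=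
  sInf {P : TwoSidedIdeal A | IsPrimeTI P}
/-- The right annihilator of a subset `X` of `A`, viewed as a left ideal of `Aᵐᵒᵖ`
(i.e. a right ideal of `A`). -/
def rightAnn (A : Type) [Ring A] (X : Set A) : Ideal Aᵐᵒᵖ where
  carrier := {a | ∀ x ∈ X, x * a.unop = 0}
  add_mem' := by
    intro a b ha hb x hx
    simp only [MulOpposite.unop_add, mul_add, ha x hx, hb x hx, add_zero]
  zero_mem' := by intro x hx; simp
  smul_mem' := by
    intro c a ha x hx
    simp only [smul_eq_mul, MulOpposite.unop_mul, ← mul_assoc, ha x hx, zero_mul]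

/-- A ring `A` is right Goldie if it has finite right uniform dimension (no infinite
independent family of nonzero right ideals) and the ascending chain condition on
right annihilators. -/
def IsRightGoldie (A : Type) [Ring A] : Prop :=
  (¬ ∃ f : ℕ → Ideal Aᵐᵒᵖ, (∀ n, f n ≠ ⊥) ∧ iSupIndep f) ∧
  ∀ f : ℕ →o Ideal Aᵐᵒᵖ, (∀ n, ∃ X : Set A, f n = rightAnn A X) →
    ∃ N : ℕ, ∀ m : ℕ, N ≤ m → f m = f N

lemma mem_rightAnn_singleton {A : Type} [Ring A] {c : A} {u : Aᵐᵒᵖ} :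
    u ∈ rightAnn A {c} ↔ c * u.unop = 0 := by
  constructor
  · intro h; exact h c rfl
  · intro h x hx; rw [Set.mem_singleton_iff] at hx; subst hx; exact h

lemma mul_rev_nilpotent {A : Type} [Ring A] {a b : A} (h : IsNilpotent (a * b)) :
    IsNilpotent (b * a) := by
  obtain ⟨n, hn⟩ := h
  refine ⟨n + 1, ?_⟩
  have key : ∀ m : ℕ, (b * a) ^ (m + 1) = b * (a * b) ^ m * a := by
    intro m
    induction m with
    | zero => simp
    | succ k ih =>
      rw [pow_succ, ih, pow_succ]
      simp [mul_assoc]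
  rw [key, hn, mul_zero, zero_mul]

lemma exists_maximal_ann {A : Type} [Ring A]
    (hacc : ∀ f : ℕ →o Ideal Aᵐᵒᵖ, (∀ n, ∃ X : Set A, f n = rightAnn A X) →
      ∃ N : ℕ, ∀ m : ℕ, N ≤ m → f m = f N)
    (T : Set (Ideal Aᵐᵒᵖ)) (hT : ∀ I ∈ T, ∃ X, I = rightAnn A X)
    (hne : T.Nonempty) : ∃ M ∈ T, ∀ I ∈ T, ¬ M < I := by
  by_contra h
  push_neg at h
  obtain ⟨I₀, hI₀⟩ := hne
  choose g hg1 hg2 using h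
  let s : ℕ → {I : Ideal Aᵐᵒᵖ // I ∈ T} := fun n =>
    Nat.rec ⟨I₀, hI₀⟩ (fun _ p => ⟨g p.1 p.2, hg1 p.1 p.2⟩) n
  have hlt : ∀ n, (s n).1 < (s (n + 1)).1 := fun n => hg2 (s n).1 (s n).2
  have hmono : Monotone (fun n => (s n).1) := monotone_nat_of_le_succ (fun n => (hlt n).le)
  obtain ⟨N, hN⟩ := hacc ⟨fun n => (s n).1, hmono⟩ (fun n => hT _ (s n).2)
  exact absurd (hN (N + 1) (Nat.le_succ N)) (ne_of_gt (hlt N))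

lemma key_zero {A : Type} [Ring A]
    (hsemi : ∀ I : TwoSidedIdeal A, SetNilpotent (I : Set A) → I = ⊥)
    (hacc : ∀ f : ℕ →o Ideal Aᵐᵒᵖ, (∀ n, ∃ X : Set A, f n = rightAnn A X) →
      ∃ N : ℕ, ∀ m : ℕ, N ≤ m → f m = f N)
    (a₀ : A) (hn : ∀ x : A, IsNilpotent (x * a₀)) : a₀ = 0 := by
  classical
  by_contra ha₀
  have : Nontrivial A := nontrivial_of_ne a₀ 0 ha₀
  set T : Set (Ideal Aᵐᵒᵖ) :=
    {I | ∃ c : A, c ≠ 0 ∧ (∃ x, c = x * a₀) ∧ I = rightAnn A {c}} with hTdef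
  obtain ⟨M, hMT, hMmax⟩ := exists_maximal_ann hacc T
    (fun I hI => by obtain ⟨c, _, _, h⟩ := hI; exact ⟨{c}, h⟩)
    ⟨rightAnn A {a₀}, a₀, ha₀, ⟨1, (one_mul a₀).symm⟩, rfl⟩
  obtain ⟨a, ha, ⟨x₀, hax₀⟩, hM⟩ := hMT
  have hann : ∀ c : A, c ≠ 0 → (∃ x, c = x * a) → rightAnn A {c} = rightAnn A {a} := by
    rintro c hc ⟨x, hx⟩
    have hcT : rightAnn A {c} ∈ T :=
      ⟨c, hc, ⟨x * x₀, by rw [hx, hax₀, mul_assoc]⟩, rfl⟩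
    have hle : M ≤ rightAnn A {c} := by
      rw [hM]
      intro u hu
      rw [mem_rightAnn_singleton] at hu ⊢
      rw [hx, mul_assoc, hu, mul_zero]
    rcases hle.lt_or_eq with hlt | heq
    · exact absurd hlt (hMmax _ hcT)
    · rw [← heq, hM]
  have hsq : ∀ c : A, (∃ x, c = x * a) → c * c = 0 := by
    rintro c ⟨x, hx⟩
    by_cases hc : c = 0
    · rw [hc, mul_zero]
    · have hcn : IsNilpotent c := by
        rw [hx, hax₀, ← mul_assoc]; exact hn (x * x₀)
      have hex : ∃ k, c ^ k = 0 := hcn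
      set m := Nat.find hex with hmdef
      have hm : c ^ m = 0 := Nat.find_spec hex
      have hmin : ∀ k < m, c ^ k ≠ 0 := fun k hk => Nat.find_min hex hk
      have hm2 : 2 ≤ m := by
        rcases Nat.lt_or_ge m 2 with h | h
        · interval_cases m
          · simp at hm
          · rw [pow_one] at hm; exact absurd hm hc
        · exact h
      have hb : c ^ (m - 1) ≠ 0 := hmin _ (by omega)
      have hbform : c ^ (m - 1) = (c ^ (m - 2) * x) * a := by
        have : m - 1 = (m - 2) + 1 := by omega
        rw [this, pow_succ, hx, mul_assoc]
      have h1 : rightAnn A {c ^ (m - 1)} = rightAnn A {a} :=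
        hann _ hb ⟨c ^ (m - 2) * x, hbform⟩
      have h2 : rightAnn A {c} = rightAnn A {a} := hann c hc ⟨x, hx⟩
      have hcb : MulOpposite.op c ∈ rightAnn A {c ^ (m - 1)} := by
        rw [mem_rightAnn_singleton, MulOpposite.unop_op, ← pow_succ]
        have : m - 1 + 1 = m := by omega
        rw [this, hm]
      rw [h1, ← h2, mem_rightAnn_singleton, MulOpposite.unop_op] at hcb
      exact hcb
  have hara : ∀ x : A, a * x * a = 0 := by
    intro x
    by_cases h : x * a = 0
    · rw [mul_assoc, h, mul_zero]
    · have h2 : (x * a) * (x * a) = 0 := hsq (x * a) ⟨x, rfl⟩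
      have hmem : MulOpposite.op (x * a) ∈ rightAnn A {x * a} :=
        mem_rightAnn_singleton.2 (by rwa [MulOpposite.unop_op])
      rw [hann (x * a) h ⟨x, rfl⟩, mem_rightAnn_singleton, MulOpposite.unop_op] at hmem
      rw [mul_assoc]
      exact hmem
  -- the two-sided ideal generated by a
  set gen : Set A := {y | ∃ r s : A, y = r * a * s} with hgendef
  set G := AddSubgroup.closure gen with hGdef
  have hmem_left : ∀ x y : A, y ∈ G → x * y ∈ G := by
    intro x y hy
    induction hy using AddSubgroup.closure_induction with
    | mem z hz =>
      obtain ⟨r, s, rfl⟩ := hz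
      exact AddSubgroup.subset_closure ⟨x * r, s, by simp [mul_assoc]⟩
    | zero => rw [mul_zero]; exact G.zero_mem
    | add z w hz hw ihz ihw => rw [mul_add]; exact G.add_mem ihz ihw
    | neg z hz ihz => rw [mul_neg]; exact G.neg_mem ihz
  have hmem_right : ∀ x y : A, y ∈ G → y * x ∈ G := by
    intro x y hy
    induction hy using AddSubgroup.closure_induction with
    | mem z hz =>
      obtain ⟨r, s, rfl⟩ := hz
      exact AddSubgroup.subset_closure ⟨r, s * x, by simp [mul_assoc]⟩
    | zero => rw [zero_mul]; exact G.zero_mem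
    | add z w hz hw ihz ihw => rw [add_mul]; exact G.add_mem ihz ihw
    | neg z hz ihz => rw [neg_mul]; exact G.neg_mem ihz
  have key2 : ∀ x y z w : A, (x * a * y) * (z * a * w) = 0 := by
    intro x y z w
    have h := hara (y * z)
    calc (x * a * y) * (z * a * w) = x * (a * (y * z) * a) * w := by simp [mul_assoc]
    _ = 0 := by rw [h, mul_zero, zero_mul]
  have hgen0 : ∀ r s : A, ∀ v ∈ G, (r * a * s) * v = 0 := by
    intro r s v hv
    induction hv using AddSubgroup.closure_induction with
    | mem z hz => obtain ⟨r', s', rfl⟩ := hz; exact key2 r s r' s'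
    | zero => rw [mul_zero]
    | add z w hz hw ihz ihw => rw [mul_add, ihz, ihw, add_zero]
    | neg z hz ihz => rw [mul_neg, ihz, neg_zero]
  have hzero : ∀ u ∈ G, ∀ v ∈ G, u * v = 0 := by
    intro u hu
    induction hu using AddSubgroup.closure_induction with
    | mem z hz => obtain ⟨r, s, rfl⟩ := hz; exact hgen0 r s
    | zero => intro v hv; rw [zero_mul]
    | add z w hz hw ihz ihw =>
      intro v hv; rw [add_mul, ihz v hv, ihw v hv, add_zero]
    | neg z hz ihz => intro v hv; rw [neg_mul, ihz v hv, neg_zero]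
  set I : TwoSidedIdeal A := TwoSidedIdeal.mk' (G : Set A) G.zero_mem
    (fun hx hy => G.add_mem hx hy) (fun hx => G.neg_mem hx)
    (fun {x y} hy => hmem_left x y hy) (fun {x y} hx => hmem_right y x hx) with hIdef
  have hInilp : SetNilpotent (I : Set A) := by
    refine ⟨2, by norm_num, ?_⟩
    intro l hl hmem
    rcases l with _ | ⟨u, _ | ⟨v, _ | ⟨w, t⟩⟩⟩
    · simp at hl
    · simp at hl
    · have hu : u ∈ G := by
        have := hmem u (by simp)
        rwa [SetLike.mem_coe, hIdef, TwoSidedIdeal.mem_mk'] at this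
      have hv : v ∈ G := by
        have := hmem v (by simp)
        rwa [SetLike.mem_coe, hIdef, TwoSidedIdeal.mem_mk'] at this
      simp only [List.prod_cons, List.prod_nil, mul_one]
      exact hzero u hu v hv
    · simp at hl
  have hIbot : I = ⊥ := hsemi I hInilp
  have haI : a ∈ I := by
    rw [hIdef, TwoSidedIdeal.mem_mk']
    exact AddSubgroup.subset_closure ⟨1, 1, by rw [one_mul, mul_one]⟩
  rw [hIbot, TwoSidedIdeal.mem_bot] at haI
  exact ha haI

/-- If the prime radical `J` of `R` is nilpotent and `R/J` is a semiprime right Goldie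
ring, then every nil one-sided ideal of `R` is nilpotent. -/
theorem nil_oneSided_ideal_nilpotent_of_primeRadical_nilpotent_goldie
    {R : Type} [Ring R] (J : TwoSidedIdeal R) (hJ : J = primeRadical R)
    (hJnilp : SetNilpotent (J : Set R))
    (hsemiprime : ∀ I : TwoSidedIdeal J.ringCon.Quotient,
      SetNilpotent (I : Set J.ringCon.Quotient) → I = ⊥)
    (hgoldie : IsRightGoldie J.ringCon.Quotient)
    (S : AddSubgroup R) (hS : IsOneSidedIdeal S)
    (hnil : ∀ a ∈ S, IsNilpotent a) :
    SetNilpotent (S : Set R) := by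
  classical
  set π : R →+* J.ringCon.Quotient := J.ringCon.mk' with hπ
  have hsub : ∀ a ∈ S, a ∈ J := by
    intro a haS
    have hkey : π a = 0 := by
      apply key_zero hsemiprime hgoldie.2
      intro q
      obtain ⟨x, hx⟩ := Quot.exists_rep q
      have hxq : π x = q := hx
      have hxa : IsNilpotent (x * a) := by
        rcases hS with hright | hleft
        · exact mul_rev_nilpotent (hnil (a * x) (hright a haS x))
        · exact hnil (x * a) (hleft a haS x)
      have := hxa.map π
      rwa [map_mul, hxq] at this
    have h0 : π a = π 0 := by rw [map_zero]; exact hkey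
    rw [J.mem_iff]
    exact J.ringCon.eq.mp h0
  obtain ⟨n, hn, hprod⟩ := hJnilp
  exact ⟨n, hn, fun l hl hm => hprod l hl (fun x hx => hsub x (hm x hx))⟩
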